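/- The maps I ↦ →_I and → ↦ I_→ are inverse order-isomorphisms between the poset of G-indexing systems (ordered by levelwise inclusion) and the poset of G-transfer systems (ordered by refinement). -/

import Mathlib

open Pointwise

/-- Conjugate of a subgroup: `conjS g H = g H g⁻¹`. -/
def conjS {G : Type} [Group G] (g : G) (H : Subgroup G) : Subgroup G :=
  MulAut.conj g • H

/-- The trivial action of a group on a type. -/
def trivialSMul (H : Type) [Group H] (X : Type) : MulAction H X where
  smul := fun _ x => x
  one_smul := fun _ => rfl
  mul_smul := fun _ _ _ => rfl

/-- Application of an explicitly given action. -/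
def actSMul {H X : Type} [Group H] (a : MulAction H X) (h : H) (x : X) : X :=
  letI := a; h • x

/-- Restriction of an action along a group homomorphism. -/
def resAction {K H : Type} [Group K] [Group H] (φ : K →* H) (X : Type)
    (a : MulAction H X) : MulAction K X :=
  letI := a; MulAction.compHom X φ

/-- The disjoint union of two actions. -/
def sumAction {H X Y : Type} [Group H] (aX : MulAction H X) (aY : MulAction H Y) :
    MulAction H (X ⊕ Y) :=
  letI := aX; letI := aY
  { smul := fun h p => Sum.map (fun x => h • x) (fun y => h • y) p
    one_smul := by rintro (x | y) <;> simp
    mul_smul := by rintro h h' (x | y) <;> simp [mul_smul] }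

/-- A map is equivariant for two explicitly given actions. -/
def IsEquivariant {H X Y : Type} [Group H] (aX : MulAction H X)
    (aY : MulAction H Y) (f : X → Y) : Prop :=
  ∀ (h : H) (x : X), f (actSMul aX h x) = actSMul aY h (f x)

/-- The setoid on `H × X` whose quotient is the induced `H`-set
`ind_K^H X = H ×_K X` of a `K`-set `X` along `K ≤ H`. -/
def indSetoid (H : Type) [Group H] (K : Subgroup H) (X : Type)
    (a : MulAction K X) : Setoid (H × X) :=
  letI := a
  { r := fun p q => ∃ k : K, p.1 * k = q.1 ∧ k • q.2 = p.2
    iseqv := by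
      constructor
      · exact fun p => ⟨1, by simp, by simp⟩
      · rintro p q ⟨k, hk1, hk2⟩
        refine ⟨k⁻¹, ?_, ?_⟩
        · rw [← hk1]; simp [mul_assoc]
        · rw [← hk2]; simp
      · rintro p q r ⟨k, hk1, hk2⟩ ⟨l, hl1, hl2⟩
        refine ⟨k * l, ?_, ?_⟩
        · rw [← hl1, ← hk1]; simp [mul_assoc]
        · rw [← hk2, ← hl2]; simp [mul_smul] }

/-- The underlying set of the induced `H`-set `ind_K^H X`. -/
def IndType (H : Type) [Group H] (K : Subgroup H) (X : Type)
    (a : MulAction K X) : Type :=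
  Quotient (indSetoid H K X a)

instance (H : Type) [Group H] [Finite H] (K : Subgroup H) (X : Type)
    [Finite X] (a : MulAction K X) : Finite (IndType H K X a) :=
  Quotient.finite _

/-- The `H`-action on the induced `H`-set `ind_K^H X`. -/
def indAction (H : Type) [Group H] (K : Subgroup H) (X : Type)
    (a : MulAction K X) : MulAction H (IndType H K X a) where
  smul h := Quotient.map (fun p => (h * p.1, p.2))
    (by rintro p q ⟨k, hk1, hk2⟩; exact ⟨k, by rw [mul_assoc, hk1], hk2⟩)
  one_smul t := Quotient.inductionOn t fun p => by
    show Quotient.map _ _ ⟦p⟧ = ⟦p⟧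
    simp
  mul_smul g h t := Quotient.inductionOn t fun p => by
    show Quotient.map _ _ ⟦p⟧ = Quotient.map _ _ (Quotient.map _ _ ⟦p⟧)
    simp [mul_assoc]

/-- A `G`-indexing system: for each subgroup `H ≤ G` a class of finite `H`-sets
containing all trivial sets and closed under isomorphism, restriction,
conjugation, subobjects, finite coproducts, and self-induction. -/
structure IndexingSystem (G : Type) [Group G] [Finite G] where
  mem : ∀ (H : Subgroup G) (X : Type), Finite X → MulAction H X → Prop
  mem_trivial : ∀ (H : Subgroup G) (X : Type) (fX : Finite X),
    mem H X fX (trivialSMul H X)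
  mem_iso : ∀ (H : Subgroup G) (X Y : Type) (fX : Finite X) (fY : Finite Y)
    (aX : MulAction H X) (aY : MulAction H Y) (e : X ≃ Y),
    IsEquivariant aX aY e → mem H X fX aX → mem H Y fY aY
  mem_res : ∀ (K H : Subgroup G) (hKH : K ≤ H) (X : Type) (fX : Finite X)
    (aX : MulAction H X), mem H X fX aX →
    mem K X fX (resAction (Subgroup.inclusion hKH) X aX)
  mem_conj : ∀ (H : Subgroup G) (g : G) (X : Type) (fX : Finite X)
    (aX : MulAction H X), mem H X fX aX →
    mem (conjS g H) X fX
      (resAction ((Subgroup.equivSMul (MulAut.conj g) H).symm.toMonoidHom) X aX)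
  mem_sub : ∀ (H : Subgroup G) (X Y : Type) (fX : Finite X) (fY : Finite Y)
    (aX : MulAction H X) (aY : MulAction H Y) (f : X → Y),
    Function.Injective f → IsEquivariant aX aY f →
    mem H Y fY aY → mem H X fX aX
  mem_sum : ∀ (H : Subgroup G) (X Y : Type) (fX : Finite X) (fY : Finite Y)
    (aX : MulAction H X) (aY : MulAction H Y),
    mem H X fX aX → mem H Y fY aY →
    mem H (X ⊕ Y) inferInstance (sumAction aX aY)
  mem_selfind : ∀ (K H : Subgroup G) (hKH : K ≤ H) (X : Type) (fX : Finite X)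
    (aX : MulAction K X),
    mem K X fX aX →
    mem H (H ⧸ K.subgroupOf H) inferInstance inferInstance →
    mem H (IndType H (K.subgroupOf H) X
        (resAction (Subgroup.subgroupOfEquivOfLe hKH).toMonoidHom X aX))
      inferInstance
      (indAction H (K.subgroupOf H) X
        (resAction (Subgroup.subgroupOfEquivOfLe hKH).toMonoidHom X aX))

/-- The graph of an indexing system: `K →_I H` iff `K ≤ H` and the orbit
`H/K` is admissible for `I`. -/
def IndexingSystem.grel {G : Type} [Group G] [Finite G] (I : IndexingSystem G)
    (K H : Subgroup G) : Prop :=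
  K ≤ H ∧ I.mem H (H ⧸ K.subgroupOf H) inferInstance inferInstance

/-- A `G`-transfer system: a partial order on the subgroups of `G` refining
inclusion, closed under conjugation and restriction. -/
structure TransferSystem (G : Type) [Group G] where
  rel : Subgroup G → Subgroup G → Prop
  le_of_rel : ∀ K H : Subgroup G, rel K H → K ≤ H
  refl : ∀ H : Subgroup G, rel H H
  antisymm : ∀ K H : Subgroup G, rel K H → rel H K → K = H
  trans : ∀ J K H : Subgroup G, rel J K → rel K H → rel J H
  conj : ∀ (K H : Subgroup G) (g : G), rel K H → rel (conjS g K) (conjS g H)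
  res : ∀ K H L : Subgroup G, rel K H → L ≤ H → rel (K ⊓ L) L

/-- The componentwise action on a disjoint union (sigma type) of actions. -/
def sigmaAction {H : Type} [Group H] {ι : Type} {f : ι → Type}
    (a : ∀ i, MulAction H (f i)) : MulAction H (Σ i, f i) where
  smul h p := ⟨p.1, actSMul (a p.1) h p.2⟩
  one_smul := by
    rintro ⟨i, x⟩
    show (⟨i, actSMul (a i) 1 x⟩ : Σ i, f i) = ⟨i, x⟩
    first
    | exact congrArg (Sigma.mk i) ((a i).one_smul x)
    | simp [actSMul]
  mul_smul := by
    rintro g h ⟨i, x⟩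
    show (⟨i, actSMul (a i) (g * h) x⟩ : Σ i, f i) = ⟨i, actSMul (a i) g (actSMul (a i) h x)⟩
    first
    | exact congrArg (Sigma.mk i) ((a i).mul_smul g h x)
    | simp [actSMul, mul_smul]

/-- `OrbitCoprod T H X aX` says that the finite `H`-set `X` is isomorphic to a
finite disjoint union of orbits `H/K` with `K → H` in the transfer system
`T`. -/
def OrbitCoprod {G : Type} [Group G] [Finite G] (T : TransferSystem G)
    (H : Subgroup G) (X : Type) (aX : MulAction H X) : Prop :=
  ∃ (n : ℕ) (K : Fin n → Subgroup G), (∀ i, T.rel (K i) H) ∧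
    ∃ e : X ≃ Σ i : Fin n, (H ⧸ (K i).subgroupOf H),
      IsEquivariant aX (sigmaAction fun _ => inferInstance) e

/-- Transfer systems are ordered by refinement. -/
instance {G : Type} [Group G] : PartialOrder (TransferSystem G) where
  le T₁ T₂ := ∀ K H : Subgroup G, T₁.rel K H → T₂.rel K H
  le_refl := fun _ _ _ h => h
  le_trans := fun _ _ _ hab hbc K H h => hbc K H (hab K H h)
  le_antisymm := fun a b h1 h2 => by
    have hrel : a.rel = b.rel := by
      funext K H; exact propext ⟨h1 K H, h2 K H⟩
    cases a; cases b; cases hrel; rfl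

/-- Indexing systems are ordered by levelwise inclusion. -/
instance {G : Type} [Group G] [Finite G] : PartialOrder (IndexingSystem G) where
  le I J := ∀ (H : Subgroup G) (X : Type) (fX : Finite X) (aX : MulAction H X),
    I.mem H X fX aX → J.mem H X fX aX
  le_refl := fun _ _ _ _ _ h => h
  le_trans := fun _ _ _ hab hbc H X fX aX h => hbc H X fX aX (hab H X fX aX h)
  le_antisymm := fun a b h1 h2 => by
    have hmem : a.mem = b.mem := by
      funext H X fX aX; exact propext ⟨h1 H X fX aX, h2 H X fX aX⟩
    cases a; cases b; cases hmem; rfl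

/-! ### Auxiliary material for Statement 4 -/

section Aux

variable {G : Type} [Group G]

lemma actSMul_one {H X : Type} [Group H] (a : MulAction H X) (x : X) :
    actSMul a 1 x = x := a.one_smul x

lemma actSMul_mul {H X : Type} [Group H] (a : MulAction H X) (g h : H) (x : X) :
    actSMul a (g * h) x = actSMul a g (actSMul a h x) := a.mul_smul g h x

lemma actSMul_inv {H X : Type} [Group H] (a : MulAction H X) (h : H) (x : X) :
    actSMul a h⁻¹ (actSMul a h x) = x := by
  rw [← actSMul_mul, inv_mul_cancel, actSMul_one]

lemma actSMul_inv_fixed {H X : Type} [Group H] (a : MulAction H X) {h : H} {x : X}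
    (e : actSMul a h x = x) : actSMul a h⁻¹ x = x := by
  conv_lhs => rw [← e]
  exact actSMul_inv a h x

lemma isEquivariant_symm {H X Y : Type} [Group H] {aX : MulAction H X} {aY : MulAction H Y}
    (e : X ≃ Y) (he : IsEquivariant aX aY e) : IsEquivariant aY aX e.symm := by
  intro h y
  apply e.injective
  rw [he, e.apply_symm_apply, e.apply_symm_apply]

lemma mem_conjS {g x : G} {H : Subgroup G} : x ∈ conjS g H ↔ ∃ h ∈ H, g * h * g⁻¹ = x := by
  rw [conjS, Subgroup.mem_smul_pointwise_iff_exists]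
  simp [MulAut.conj_apply]

lemma conjS_one (H : Subgroup G) : conjS 1 H = H := by
  ext x; simp [mem_conjS]

lemma conjS_le_conjS {K H : Subgroup G} (g : G) (h : K ≤ H) : conjS g K ≤ conjS g H := by
  intro x hx
  rw [mem_conjS] at hx ⊢
  obtain ⟨k, hk, e⟩ := hx
  exact ⟨k, h hk, e⟩

lemma conjS_self {H : Subgroup G} (h : H) : conjS (h : G) H = H := by
  ext x
  simp only [mem_conjS]
  constructor
  · rintro ⟨k, hk, rfl⟩
    exact H.mul_mem (H.mul_mem h.2 hk) (H.inv_mem h.2)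
  · intro hx
    refine ⟨(h : G)⁻¹ * x * h, H.mul_mem (H.mul_mem (H.inv_mem h.2) hx) h.2, by group⟩

/-- The stabilizer of `x` under an explicitly given action of `H ≤ G`, as a
subgroup of `G`. -/
def stabG (H : Subgroup G) {X : Type} (a : MulAction H X) (x : X) : Subgroup G where
  carrier := {g | ∃ hg : g ∈ H, actSMul a ⟨g, hg⟩ x = x}
  one_mem' := ⟨H.one_mem, actSMul_one a x⟩
  mul_mem' := by
    rintro p q ⟨hp, ep⟩ ⟨hq, eq'⟩
    refine ⟨H.mul_mem hp hq, ?_⟩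
    have h1 : (⟨p * q, H.mul_mem hp hq⟩ : H) = ⟨p, hp⟩ * ⟨q, hq⟩ := rfl
    rw [h1, actSMul_mul, eq', ep]
  inv_mem' := by
    rintro p ⟨hp, ep⟩
    refine ⟨H.inv_mem hp, ?_⟩
    have h1 : (⟨p⁻¹, H.inv_mem hp⟩ : H) = (⟨p, hp⟩ : H)⁻¹ := rfl
    rw [h1]
    exact actSMul_inv_fixed a ep

lemma mem_stabG {H : Subgroup G} {X : Type} {a : MulAction H X} {x : X} {g : G} :
    g ∈ stabG H a x ↔ ∃ hg : g ∈ H, actSMul a ⟨g, hg⟩ x = x := Iff.rfl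

lemma coe_mem_stabG {H : Subgroup G} {X : Type} {a : MulAction H X} {x : X} (h : H) :
    (h : G) ∈ stabG H a x ↔ actSMul a h x = x := by
  rw [mem_stabG]
  constructor
  · rintro ⟨hg, e⟩
    rwa [show (⟨(h : G), hg⟩ : H) = h from Subtype.ext rfl] at e
  · intro e
    exact ⟨h.2, by rwa [show (⟨(h : G), h.2⟩ : H) = h from Subtype.ext rfl]⟩

lemma stabG_le {H : Subgroup G} {X : Type} {a : MulAction H X} {x : X} :
    stabG H a x ≤ H := fun _ hg => hg.1

lemma stabG_eq_of_inj {H : Subgroup G} {X Y : Type} {aX : MulAction H X} {aY : MulAction H Y}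
    (f : X → Y) (hinj : Function.Injective f) (heq : IsEquivariant aX aY f) (x : X) :
    stabG H aX x = stabG H aY (f x) := by
  ext g
  simp only [mem_stabG]
  constructor
  · rintro ⟨hg, e⟩
    exact ⟨hg, by rw [← heq]; exact congrArg f e⟩
  · rintro ⟨hg, e⟩
    refine ⟨hg, hinj ?_⟩
    rw [heq]; exact e

/-- `Good T H a` : every stabilizer for the action `a` is related to `H`. -/
def Good (T : TransferSystem G) (H : Subgroup G) {X : Type} (a : MulAction H X) : Prop :=
  ∀ x : X, T.rel (stabG H a x) H

/- stabilizer computations -/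

lemma stabG_trivial (H : Subgroup G) (X : Type) (x : X) :
    stabG H (trivialSMul H X) x = H := by
  ext g
  simp only [mem_stabG]
  exact ⟨fun ⟨hg, _⟩ => hg, fun hg => ⟨hg, rfl⟩⟩

lemma stabG_res {K H : Subgroup G} (hKH : K ≤ H) {X : Type} (aX : MulAction H X) (x : X) :
    stabG K (resAction (Subgroup.inclusion hKH) X aX) x = stabG H aX x ⊓ K := by
  ext g
  simp only [mem_stabG, Subgroup.mem_inf]
  constructor
  · rintro ⟨hg, e⟩
    refine ⟨⟨hKH hg, ?_⟩, hg⟩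
    have h1 : Subgroup.inclusion hKH (⟨g, hg⟩ : K) = (⟨g, hKH hg⟩ : H) := Subtype.ext rfl
    have e' : actSMul aX (Subgroup.inclusion hKH ⟨g, hg⟩) x = x := e
    rwa [h1] at e'
  · rintro ⟨⟨hg, e⟩, hgK⟩
    refine ⟨hgK, ?_⟩
    show actSMul aX (Subgroup.inclusion hKH ⟨g, hgK⟩) x = x
    rwa [show Subgroup.inclusion hKH (⟨g, hgK⟩ : K) = (⟨g, hg⟩ : H) from Subtype.ext rfl]

lemma stabG_sum_inl {H : Subgroup G} {X Y : Type} (aX : MulAction H X) (aY : MulAction H Y)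
    (x : X) : stabG H (sumAction aX aY) (Sum.inl x) = stabG H aX x := by
  ext g
  simp only [mem_stabG]
  constructor
  · rintro ⟨hg, e⟩
    have e' : Sum.inl (actSMul aX ⟨g, hg⟩ x) = (Sum.inl x : X ⊕ Y) := e
    exact ⟨hg, Sum.inl.inj e'⟩
  · rintro ⟨hg, e⟩
    refine ⟨hg, ?_⟩
    show Sum.inl (actSMul aX ⟨g, hg⟩ x) = Sum.inl x
    rw [e]

lemma stabG_sum_inr {H : Subgroup G} {X Y : Type} (aX : MulAction H X) (aY : MulAction H Y)
    (y : Y) : stabG H (sumAction aX aY) (Sum.inr y) = stabG H aY y := by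
  ext g
  simp only [mem_stabG]
  constructor
  · rintro ⟨hg, e⟩
    have e' : Sum.inr (actSMul aY ⟨g, hg⟩ y) = (Sum.inr y : X ⊕ Y) := e
    exact ⟨hg, Sum.inr.inj e'⟩
  · rintro ⟨hg, e⟩
    refine ⟨hg, ?_⟩
    show Sum.inr (actSMul aY ⟨g, hg⟩ y) = Sum.inr y
    rw [e]

lemma stabG_sigma {H : Subgroup G} {ι : Type} {f : ι → Type} (a : ∀ i, MulAction H (f i))
    (i : ι) (q : f i) : stabG H (sigmaAction a) ⟨i, q⟩ = stabG H (a i) q := by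
  ext g
  simp only [mem_stabG]
  constructor
  · rintro ⟨hg, e⟩
    have e' : (⟨i, actSMul (a i) ⟨g, hg⟩ q⟩ : Σ j, f j) = ⟨i, q⟩ := e
    exact ⟨hg, by simpa using e'⟩
  · rintro ⟨hg, e⟩
    refine ⟨hg, ?_⟩
    show (⟨i, actSMul (a i) ⟨g, hg⟩ q⟩ : Σ j, f j) = ⟨i, q⟩
    rw [e]

lemma stabG_quot {K H : Subgroup G} (hKH : K ≤ H) (h : H) :
    stabG H (inferInstance : MulAction H (H ⧸ K.subgroupOf H)) (↑h) = conjS (h : G) K := by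
  ext g
  simp only [mem_stabG, mem_conjS]
  constructor
  · rintro ⟨hg, e⟩
    have e' : ((⟨g, hg⟩ * h : H) : H ⧸ K.subgroupOf H) = ((h : H) : H ⧸ K.subgroupOf H) := e
    rw [QuotientGroup.eq, Subgroup.mem_subgroupOf] at e'
    refine ⟨((((⟨g, hg⟩ * h : H)⁻¹ * h : H) : G))⁻¹, K.inv_mem e', ?_⟩
    push_cast
    group
  · rintro ⟨k, hk, rfl⟩
    have hgH : (h : G) * k * (h : G)⁻¹ ∈ H := H.mul_mem (H.mul_mem h.2 (hKH hk)) (H.inv_mem h.2)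
    refine ⟨hgH, ?_⟩
    show ((⟨(h : G) * k * (h : G)⁻¹, hgH⟩ * h : H) : H ⧸ K.subgroupOf H)
        = ((h : H) : H ⧸ K.subgroupOf H)
    rw [QuotientGroup.eq, Subgroup.mem_subgroupOf]
    have hcoe : (((⟨(h : G) * k * (h : G)⁻¹, hgH⟩ * h : H)⁻¹ * h : H) : G) = k⁻¹ := by
      push_cast
      group
    rw [hcoe]
    exact K.inv_mem hk

lemma stabG_conj {H : Subgroup G} (g : G) {X : Type} (aX : MulAction H X) (x : X) :
    stabG (conjS g H)
      (resAction ((Subgroup.equivSMul (MulAut.conj g) H).symm.toMonoidHom) X aX) x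
      = conjS g (stabG H aX x) := by
  set φ : H ≃* conjS g H := Subgroup.equivSMul (MulAut.conj g) H with hφ
  have hcoe : ∀ h : H, ((φ h : conjS g H) : G) = g * (h : G) * g⁻¹ := fun h => rfl
  have hcoe' : ∀ c : conjS g H, ((φ.symm c : H) : G) = g⁻¹ * (c : G) * g := by
    intro c
    have h1 : ((φ (φ.symm c) : conjS g H) : G) = g * ((φ.symm c : H) : G) * g⁻¹ :=
      hcoe (φ.symm c)
    rw [φ.apply_symm_apply] at h1
    rw [h1]
    group
  ext a
  simp only [mem_stabG, mem_conjS]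
  constructor
  · rintro ⟨ha, e⟩
    have e' : actSMul aX (φ.symm ⟨a, ha⟩) x = x := e
    refine ⟨((φ.symm ⟨a, ha⟩ : H) : G), (coe_mem_stabG _).2 e', ?_⟩
    rw [hcoe' ⟨a, ha⟩]
    group
  · rintro ⟨s, hs, rfl⟩
    obtain ⟨hsH, es⟩ := hs
    have haH : g * s * g⁻¹ ∈ conjS g H := mem_conjS.2 ⟨s, hsH, rfl⟩
    refine ⟨haH, ?_⟩
    show actSMul aX (φ.symm ⟨g * s * g⁻¹, haH⟩) x = x
    have h2 : φ.symm ⟨g * s * g⁻¹, haH⟩ = (⟨s, hsH⟩ : H) := by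
      apply Subtype.ext
      rw [hcoe' ⟨g * s * g⁻¹, haH⟩]
      show g⁻¹ * (g * s * g⁻¹) * g = s
      group
    rwa [h2]

lemma stabG_ind {K H : Subgroup G} (hKH : K ≤ H) {X : Type} (aX : MulAction K X)
    (h : H) (x : X) :
    stabG H
      (indAction H (K.subgroupOf H) X
        (resAction (Subgroup.subgroupOfEquivOfLe hKH).toMonoidHom X aX))
      (Quotient.mk
        (indSetoid H (K.subgroupOf H) X
          (resAction (Subgroup.subgroupOfEquivOfLe hKH).toMonoidHom X aX)) (h, x))
      = conjS (h : G) (stabG K aX x) := by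
  set a' := resAction (Subgroup.subgroupOfEquivOfLe hKH).toMonoidHom X aX with ha'
  set st := indSetoid H (K.subgroupOf H) X a' with hst
  have hcoeE : ∀ k : K.subgroupOf H, ((Subgroup.subgroupOfEquivOfLe hKH k : K) : G)
      = ((k : H) : G) := fun k => rfl
  ext g
  simp only [mem_stabG, mem_conjS]
  constructor
  · rintro ⟨hg, e⟩
    have e' : Quotient.mk st (⟨g, hg⟩ * h, x) = Quotient.mk st (h, x) := e
    obtain ⟨k, hk1, hk2⟩ := Quotient.exact e'
    -- hk1 : (⟨g,hg⟩ * h) * ↑k = h  (in H), hk2 : k • x = x for the action a'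
    have hk2' : actSMul aX (Subgroup.subgroupOfEquivOfLe hKH k) x = x := hk2
    have hmem : ((Subgroup.subgroupOfEquivOfLe hKH k : K) : G) ∈ stabG K aX x :=
      (coe_mem_stabG _).2 hk2'
    refine ⟨(((Subgroup.subgroupOfEquivOfLe hKH k : K) : G))⁻¹,
      (stabG K aX x).inv_mem hmem, ?_⟩
    have e1 : g * (h : G) * ((k : H) : G) = (h : G) := by
      have h4 : (((⟨g, hg⟩ * h : H) * ((k : H)) : H) : G) = ((h : H) : G) :=
        congrArg (fun z : H => (z : G)) hk1
      push_cast at h4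
      exact h4
    rw [hcoeE]
    calc (h : G) * (((k : H) : G))⁻¹ * ((h : G))⁻¹
        = (g * (h : G) * ((k : H) : G)) * (((k : H) : G))⁻¹ * ((h : G))⁻¹ := by rw [e1]
      _ = g := by group
  · rintro ⟨s, hs, rfl⟩
    have hsK : s ∈ K := stabG_le hs
    obtain ⟨hsK', es⟩ := hs
    have hg : (h : G) * s * (h : G)⁻¹ ∈ H :=
      H.mul_mem (H.mul_mem h.2 (hKH hsK)) (H.inv_mem h.2)
    refine ⟨hg, ?_⟩
    show Quotient.mk st (⟨(h : G) * s * (h : G)⁻¹, hg⟩ * h, x) = Quotient.mk st (h, x)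
    apply Quotient.sound
    have hsinvH : s⁻¹ ∈ H := H.inv_mem (hKH hsK)
    have hsinvK : (⟨s⁻¹, hsinvH⟩ : H) ∈ K.subgroupOf H := by
      rw [Subgroup.mem_subgroupOf]; exact K.inv_mem hsK
    refine ⟨⟨⟨s⁻¹, hsinvH⟩, hsinvK⟩, ?_, ?_⟩
    · apply Subtype.ext
      push_cast
      group
    · show actSMul a' _ x = x
      have h3 : actSMul a' (⟨⟨s⁻¹, hsinvH⟩, hsinvK⟩ : K.subgroupOf H) x
          = actSMul aX (⟨s⁻¹, K.inv_mem hsK⟩ : K) x := by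
        show actSMul aX (Subgroup.subgroupOfEquivOfLe hKH _) x = _
        congr 1
      rw [h3]
      rw [show (⟨s⁻¹, K.inv_mem hsK⟩ : K) = (⟨s, hsK⟩ : K)⁻¹ from Subtype.ext rfl]
      apply actSMul_inv_fixed
      rwa [show (⟨s, hsK⟩ : K) = (⟨s, hsK'⟩ : K) from Subtype.ext rfl]

end Aux
section Aux2

variable {G : Type} [Group G]

lemma orbit_map_exists (H : Subgroup G) {X : Type} (aX : MulAction H X) (x : X) :
    ∃ f : (H ⧸ (stabG H aX x).subgroupOf H) → X,
      (∀ h : H, f (↑h) = actSMul aX h x) ∧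
      Function.Injective f ∧
      IsEquivariant (inferInstance : MulAction H (H ⧸ (stabG H aX x).subgroupOf H)) aX f := by
  have key : ∀ a b : H,
      @Setoid.r H (QuotientGroup.leftRel ((stabG H aX x).subgroupOf H)) a b →
        actSMul aX a x = actSMul aX b x := by
    intro a b hab
    have hab' : a⁻¹ * b ∈ (stabG H aX x).subgroupOf H := QuotientGroup.leftRel_apply.mp hab
    rw [Subgroup.mem_subgroupOf, coe_mem_stabG] at hab'
    calc actSMul aX a x = actSMul aX a (actSMul aX (a⁻¹ * b) x) := by rw [hab']
      _ = actSMul aX b x := by rw [← actSMul_mul, mul_inv_cancel_left]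
  refine ⟨fun q => Quotient.liftOn' q (fun h => actSMul aX h x) key, fun h => rfl, ?_, ?_⟩
  · intro q1 q2 hq
    obtain ⟨a, rfl⟩ := QuotientGroup.mk_surjective q1
    obtain ⟨b, rfl⟩ := QuotientGroup.mk_surjective q2
    have hq' : actSMul aX a x = actSMul aX b x := hq
    rw [QuotientGroup.eq, Subgroup.mem_subgroupOf, coe_mem_stabG]
    rw [actSMul_mul, ← hq', actSMul_inv]
  · intro h q
    obtain ⟨a, rfl⟩ := QuotientGroup.mk_surjective q
    show actSMul aX (h * a) x = actSMul aX h (actSMul aX a x)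
    exact actSMul_mul aX h a x

lemma good_orbitCoprod [Finite G] (T : TransferSystem G) (H : Subgroup G) (X : Type)
    (fX : Finite X) (aX : MulAction H X) (hgood : Good T H aX) : OrbitCoprod T H X aX := by
  letI := aX
  letI := fX
  obtain ⟨n, ⟨eq⟩⟩ := Finite.exists_equiv_fin (Quotient (MulAction.orbitRel H X))
  set x : Fin n → X := fun i => (eq.symm i).out with hxdef
  have hx : ∀ i, Quotient.mk (MulAction.orbitRel H X) (x i) = eq.symm i := fun i =>
    Quotient.out_eq _
  choose fo hfo₁ hfo₂ hfo₃ using fun i => orbit_map_exists H aX (x i)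
  refine ⟨n, fun i => stabG H aX (x i), fun i => hgood (x i), ?_⟩
  set f : (Σ i : Fin n, H ⧸ (stabG H aX (x i)).subgroupOf H) → X := fun p => fo p.1 p.2
    with hfdef
  have hf_inj : Function.Injective f := by
    rintro ⟨i, qi⟩ ⟨j, qj⟩ hij
    obtain ⟨a, rfl⟩ := QuotientGroup.mk_surjective qi
    obtain ⟨b, rfl⟩ := QuotientGroup.mk_surjective qj
    have hij' : actSMul aX a (x i) = actSMul aX b (x j) := by
      have h1 := hfo₁ i a
      have h2 := hfo₁ j b
      rw [← h1, ← h2]; exact hij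
    have hmkij : i = j := by
      apply eq.symm.injective
      rw [← hx i, ← hx j]
      apply Quotient.sound
      show x i ∈ MulAction.orbit H (x j)
      refine ⟨a⁻¹ * b, ?_⟩
      show actSMul aX (a⁻¹ * b) (x j) = x i
      rw [actSMul_mul, ← hij', actSMul_inv]
    subst hmkij
    have hab : (↑a : H ⧸ (stabG H aX (x i)).subgroupOf H) = ↑b :=
      hfo₂ i (by rw [hfo₁, hfo₁]; exact hij')
    rw [hab]
  have hf_surj : Function.Surjective f := by
    intro y
    set i := eq (Quotient.mk (MulAction.orbitRel H X) y) with hi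
    have h5 : Quotient.mk (MulAction.orbitRel H X) (x i) = Quotient.mk _ y := by
      rw [hx i, hi, Equiv.symm_apply_apply]
    obtain ⟨h, hh⟩ := Quotient.exact h5
    refine ⟨⟨i, ↑(h⁻¹)⟩, ?_⟩
    show fo i ↑(h⁻¹) = y
    rw [hfo₁]
    have hh' : actSMul aX h y = x i := hh
    rw [← hh', actSMul_inv]
  have hequiv : IsEquivariant (sigmaAction fun i : Fin n =>
      (inferInstance : MulAction H (H ⧸ (stabG H aX (x i)).subgroupOf H))) aX f := by
    intro h p
    rcases p with ⟨i, q⟩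
    show fo i (actSMul inferInstance h q) = actSMul aX h (fo i q)
    exact hfo₃ i h q
  exact ⟨(Equiv.ofBijective f ⟨hf_inj, hf_surj⟩).symm,
    isEquivariant_symm (Equiv.ofBijective f ⟨hf_inj, hf_surj⟩) hequiv⟩

lemma orbitCoprod_good [Finite G] (T : TransferSystem G) (H : Subgroup G) (X : Type)
    (aX : MulAction H X) (h : OrbitCoprod T H X aX) : Good T H aX := by
  obtain ⟨n, K, hK, e, he⟩ := h
  intro x
  have h1 := stabG_eq_of_inj (⇑e) e.injective he x
  rw [h1]
  suffices h2 : ∀ p : (Σ i : Fin n, H ⧸ (K i).subgroupOf H),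
      T.rel (stabG H (sigmaAction fun _ => inferInstance) p) H from h2 (e x)
  rintro ⟨i, q⟩
  obtain ⟨a, rfl⟩ := QuotientGroup.mk_surjective q
  rw [stabG_sigma, stabG_quot (T.le_of_rel _ _ (hK i))]
  have h3 := T.conj (K i) H (a : G) (hK i)
  rwa [conjS_self] at h3

end Aux2
section Aux3

variable {G : Type} [Group G] [Finite G]

lemma grel_refl (I : IndexingSystem G) (H : Subgroup G) : I.grel H H := by
  refine ⟨le_refl H, ?_⟩
  have hsub : ∀ a b : H ⧸ H.subgroupOf H, a = b := by
    intro a b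
    obtain ⟨c, rfl⟩ := QuotientGroup.mk_surjective a
    obtain ⟨d, rfl⟩ := QuotientGroup.mk_surjective b
    rw [QuotientGroup.eq, Subgroup.mem_subgroupOf]
    exact (c⁻¹ * d).2
  exact I.mem_iso H (H ⧸ H.subgroupOf H) (H ⧸ H.subgroupOf H) inferInstance inferInstance
    (trivialSMul H _) inferInstance (Equiv.refl _) (fun h x => hsub _ _)
    (I.mem_trivial H _ inferInstance)

lemma grel_res (I : IndexingSystem G) (K H L : Subgroup G) (h : I.grel K H) (hLH : L ≤ H) :
    I.grel (K ⊓ L) L := by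
  obtain ⟨hKH, hm⟩ := h
  refine ⟨inf_le_right, ?_⟩
  have hres := I.mem_res L H hLH (H ⧸ K.subgroupOf H) inferInstance inferInstance hm
  have key : ∀ a b : L, @Setoid.r L (QuotientGroup.leftRel ((K ⊓ L).subgroupOf L)) a b →
      ((Subgroup.inclusion hLH a : H) : H ⧸ K.subgroupOf H) = ↑(Subgroup.inclusion hLH b) := by
    intro a b hab
    have hab' : a⁻¹ * b ∈ (K ⊓ L).subgroupOf L := QuotientGroup.leftRel_apply.mp hab
    rw [Subgroup.mem_subgroupOf, Subgroup.mem_inf] at hab'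
    rw [QuotientGroup.eq, Subgroup.mem_subgroupOf]
    show (((Subgroup.inclusion hLH a)⁻¹ * Subgroup.inclusion hLH b : H) : G) ∈ K
    exact hab'.1
  set θ : (L ⧸ (K ⊓ L).subgroupOf L) → (H ⧸ K.subgroupOf H) :=
    fun q => Quotient.liftOn' q (fun l => ↑(Subgroup.inclusion hLH l)) key with hθ
  have hinj : Function.Injective θ := by
    intro q1 q2 hq
    obtain ⟨a, rfl⟩ := QuotientGroup.mk_surjective q1
    obtain ⟨b, rfl⟩ := QuotientGroup.mk_surjective q2
    have hq' : ((Subgroup.inclusion hLH a : H) : H ⧸ K.subgroupOf H)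
        = ↑(Subgroup.inclusion hLH b) := hq
    rw [QuotientGroup.eq, Subgroup.mem_subgroupOf] at hq'
    rw [QuotientGroup.eq, Subgroup.mem_subgroupOf, Subgroup.mem_inf]
    exact ⟨hq', (a⁻¹ * b).2⟩
  have hequiv : IsEquivariant (inferInstance : MulAction L (L ⧸ (K ⊓ L).subgroupOf L))
      (resAction (Subgroup.inclusion hLH) (H ⧸ K.subgroupOf H) inferInstance) θ := by
    intro l q
    obtain ⟨a, rfl⟩ := QuotientGroup.mk_surjective q
    rfl
  exact I.mem_sub L (L ⧸ (K ⊓ L).subgroupOf L) (H ⧸ K.subgroupOf H) inferInstance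
    inferInstance inferInstance _ θ hinj hequiv hres

lemma grel_conj (I : IndexingSystem G) (K H : Subgroup G) (g : G) (h : I.grel K H) :
    I.grel (conjS g K) (conjS g H) := by
  obtain ⟨hKH, hm⟩ := h
  refine ⟨conjS_le_conjS g hKH, ?_⟩
  have hconj := I.mem_conj H g (H ⧸ K.subgroupOf H) inferInstance inferInstance hm
  set φ : H ≃* conjS g H := Subgroup.equivSMul (MulAut.conj g) H with hφ
  have hcoe : ∀ x : H, ((φ x : conjS g H) : G) = g * (x : G) * g⁻¹ := fun x => rfl
  have hcoe2 : ∀ a b : H, (((φ a)⁻¹ * φ b : conjS g H) : G)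
      = g * ((a⁻¹ * b : H) : G) * g⁻¹ := by
    intro a b
    rw [Subgroup.coe_mul, Subgroup.coe_inv, hcoe, hcoe, Subgroup.coe_mul, Subgroup.coe_inv]
    group
  have key : ∀ a b : H, @Setoid.r H (QuotientGroup.leftRel (K.subgroupOf H)) a b →
      ((φ a : conjS g H) : conjS g H ⧸ (conjS g K).subgroupOf (conjS g H)) = ↑(φ b) := by
    intro a b hab
    have hab' := QuotientGroup.leftRel_apply.mp hab
    rw [Subgroup.mem_subgroupOf] at hab'
    rw [QuotientGroup.eq, Subgroup.mem_subgroupOf]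
    show (((φ a)⁻¹ * φ b : conjS g H) : G) ∈ conjS g K
    rw [hcoe2]
    exact mem_conjS.2 ⟨_, hab', rfl⟩
  set θ : (H ⧸ K.subgroupOf H) → (conjS g H ⧸ (conjS g K).subgroupOf (conjS g H)) :=
    fun q => Quotient.liftOn' q (fun a => ↑(φ a)) key with hθ
  have hinj : Function.Injective θ := by
    intro q1 q2 hq
    obtain ⟨a, rfl⟩ := QuotientGroup.mk_surjective q1
    obtain ⟨b, rfl⟩ := QuotientGroup.mk_surjective q2
    have hq' : ((φ a : conjS g H) : conjS g H ⧸ (conjS g K).subgroupOf (conjS g H))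
        = ↑(φ b) := hq
    rw [QuotientGroup.eq, Subgroup.mem_subgroupOf] at hq'
    rw [QuotientGroup.eq, Subgroup.mem_subgroupOf]
    rw [hcoe2] at hq'
    obtain ⟨k, hk, hk2⟩ := mem_conjS.1 hq'
    have hk3 : k = ((a⁻¹ * b : H) : G) := by
      have := hk2
      have h9 : g⁻¹ * (g * k * g⁻¹) * g = g⁻¹ * (g * ((a⁻¹ * b : H) : G) * g⁻¹) * g := by
        rw [this]
      rwa [show ∀ c : G, g⁻¹ * (g * c * g⁻¹) * g = c from fun c => by group,
        show g⁻¹ * (g * ((a⁻¹ * b : H) : G) * g⁻¹) * g = ((a⁻¹ * b : H) : G) from by group]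
        at h9
    rw [hk3] at hk
    exact hk
  have hsurj : Function.Surjective θ := by
    intro q
    obtain ⟨c, rfl⟩ := QuotientGroup.mk_surjective q
    refine ⟨↑(φ.symm c), ?_⟩
    show ((φ (φ.symm c) : conjS g H) : conjS g H ⧸ (conjS g K).subgroupOf (conjS g H)) = ↑c
    rw [φ.apply_symm_apply]
  have hequiv : IsEquivariant
      (resAction ((Subgroup.equivSMul (MulAut.conj g) H).symm.toMonoidHom)
        (H ⧸ K.subgroupOf H) inferInstance)
      (inferInstance : MulAction (conjS g H)
        (conjS g H ⧸ (conjS g K).subgroupOf (conjS g H))) θ := by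
    intro (c : conjS g H) q
    obtain ⟨a, rfl⟩ := QuotientGroup.mk_surjective q
    show ((φ (φ.symm c * a) : conjS g H) : conjS g H ⧸ (conjS g K).subgroupOf (conjS g H))
      = ↑(c * φ a)
    rw [map_mul, φ.apply_symm_apply]
  exact I.mem_iso (conjS g H) (H ⧸ K.subgroupOf H)
    (conjS g H ⧸ (conjS g K).subgroupOf (conjS g H)) inferInstance inferInstance _
    inferInstance (Equiv.ofBijective θ ⟨hinj, hsurj⟩) hequiv hconj

lemma grel_trans' (I : IndexingSystem G) (J K H : Subgroup G)
    (h1 : I.grel J K) (h2 : I.grel K H) : I.grel J H := by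
  obtain ⟨hJK, m1⟩ := h1
  obtain ⟨hKH, m2⟩ := h2
  refine ⟨hJK.trans hKH, ?_⟩
  have hind := I.mem_selfind K H hKH (K ⧸ J.subgroupOf K) inferInstance inferInstance m1 m2
  set a' := resAction (Subgroup.subgroupOfEquivOfLe hKH).toMonoidHom (K ⧸ J.subgroupOf K)
    inferInstance with ha'
  set st := indSetoid H (K.subgroupOf H) (K ⧸ J.subgroupOf K) a' with hst
  have key : ∀ a b : H, @Setoid.r H (QuotientGroup.leftRel (J.subgroupOf H)) a b →
      Quotient.mk st (a, ((1 : K) : K ⧸ J.subgroupOf K))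
        = Quotient.mk st (b, ((1 : K) : K ⧸ J.subgroupOf K)) := by
    intro a b hab
    have hab' : a⁻¹ * b ∈ J.subgroupOf H := QuotientGroup.leftRel_apply.mp hab
    rw [Subgroup.mem_subgroupOf] at hab'
    apply Quotient.sound
    have hmem' : (a⁻¹ * b : H) ∈ K.subgroupOf H := by
      rw [Subgroup.mem_subgroupOf]; exact hJK hab'
    refine ⟨⟨a⁻¹ * b, hmem'⟩, ?_, ?_⟩
    · show a * (a⁻¹ * b) = b
      group
    · show ((Subgroup.subgroupOfEquivOfLe hKH ⟨a⁻¹ * b, hmem'⟩ * 1 : K) : K ⧸ J.subgroupOf K)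
        = ((1 : K) : K ⧸ J.subgroupOf K)
      rw [QuotientGroup.eq, Subgroup.mem_subgroupOf]
      have h8 : (Subgroup.subgroupOfEquivOfLe hKH ⟨a⁻¹ * b, hmem'⟩ * 1 : K)⁻¹ * 1
          = (Subgroup.subgroupOfEquivOfLe hKH ⟨a⁻¹ * b, hmem'⟩)⁻¹ := by group
      rw [h8]
      exact J.inv_mem hab'
  set Ψ : (H ⧸ J.subgroupOf H) → IndType H (K.subgroupOf H) (K ⧸ J.subgroupOf K) a' :=
    fun q => Quotient.liftOn' q (fun a => Quotient.mk st (a, ((1 : K) : K ⧸ J.subgroupOf K)))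
      key with hΨ
  have hinj : Function.Injective Ψ := by
    intro q1 q2 hq
    obtain ⟨a, rfl⟩ := QuotientGroup.mk_surjective q1
    obtain ⟨b, rfl⟩ := QuotientGroup.mk_surjective q2
    have hq' : Quotient.mk st (a, ((1 : K) : K ⧸ J.subgroupOf K))
        = Quotient.mk st (b, ((1 : K) : K ⧸ J.subgroupOf K)) := hq
    obtain ⟨k, hk1, hk2⟩ := Quotient.exact hq'
    have hk2' : ((Subgroup.subgroupOfEquivOfLe hKH k * 1 : K) : K ⧸ J.subgroupOf K)
        = ((1 : K) : K ⧸ J.subgroupOf K) := hk2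
    rw [QuotientGroup.eq, Subgroup.mem_subgroupOf] at hk2'
    have h9 : (Subgroup.subgroupOfEquivOfLe hKH k * 1 : K)⁻¹ * 1
        = (Subgroup.subgroupOfEquivOfLe hKH k)⁻¹ := by group
    rw [h9] at hk2'
    have hkJ : (((k : H) : G)) ∈ J := by
      have h10 := J.inv_mem hk2'
      simpa using h10
    rw [QuotientGroup.eq, Subgroup.mem_subgroupOf]
    have hk1' : a * (k : H) = b := hk1
    have h11 : a⁻¹ * b = (k : H) := by
      rw [← hk1']; group
    rw [h11]
    exact hkJ
  have hsurj : Function.Surjective Ψ := by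
    intro t
    refine Quotient.inductionOn t ?_
    rintro ⟨h0, q⟩
    obtain ⟨kk, rfl⟩ := QuotientGroup.mk_surjective q
    refine ⟨↑(h0 * Subgroup.inclusion hKH kk), ?_⟩
    show Quotient.mk st (h0 * Subgroup.inclusion hKH kk, ((1 : K) : K ⧸ J.subgroupOf K))
      = Quotient.mk st (h0, (↑kk : K ⧸ J.subgroupOf K))
    apply Quotient.sound
    have hmem' : (Subgroup.inclusion hKH kk)⁻¹ ∈ K.subgroupOf H := by
      rw [Subgroup.mem_subgroupOf]
      show (((Subgroup.inclusion hKH kk)⁻¹ : H) : G) ∈ K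
      exact K.inv_mem kk.2
    refine ⟨⟨(Subgroup.inclusion hKH kk)⁻¹, hmem'⟩, ?_, ?_⟩
    · show (h0 * Subgroup.inclusion hKH kk) * (Subgroup.inclusion hKH kk)⁻¹ = h0
      group
    · show ((Subgroup.subgroupOfEquivOfLe hKH ⟨(Subgroup.inclusion hKH kk)⁻¹, hmem'⟩ * kk : K)
          : K ⧸ J.subgroupOf K) = ((1 : K) : K ⧸ J.subgroupOf K)
      have h12 : Subgroup.subgroupOfEquivOfLe hKH ⟨(Subgroup.inclusion hKH kk)⁻¹, hmem'⟩
          = kk⁻¹ := by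
        apply Subtype.ext
        rfl
      rw [h12]
      rw [inv_mul_cancel]
  have hequiv : IsEquivariant (inferInstance : MulAction H (H ⧸ J.subgroupOf H))
      (indAction H (K.subgroupOf H) (K ⧸ J.subgroupOf K) a') Ψ := by
    intro h q
    obtain ⟨a, rfl⟩ := QuotientGroup.mk_surjective q
    rfl
  exact I.mem_iso H (IndType H (K.subgroupOf H) (K ⧸ J.subgroupOf K) a')
    (H ⧸ J.subgroupOf H) inferInstance inferInstance _ inferInstance
    (Equiv.ofBijective Ψ ⟨hinj, hsurj⟩).symm
    (isEquivariant_symm (Equiv.ofBijective Ψ ⟨hinj, hsurj⟩) hequiv) hind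

/-- The transfer system attached to an indexing system (its graph). -/
def toTS (I : IndexingSystem G) : TransferSystem G where
  rel := I.grel
  le_of_rel _ _ h := h.1
  refl := grel_refl I
  antisymm _ _ h1 h2 := le_antisymm h1.1 h2.1
  trans := grel_trans' I
  conj K H g h := grel_conj I K H g h
  res := grel_res I

end Aux3
section Aux4

variable {G : Type} [Group G] [Finite G]

/-- The coproducts-of-orbits indexing system attached to a transfer system. -/
def toIS (T : TransferSystem G) : IndexingSystem G where
  mem H X _fX aX := OrbitCoprod T H X aX
  mem_trivial H X fX := good_orbitCoprod T H X fX _ (fun x => by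
    rw [stabG_trivial]; exact T.refl H)
  mem_iso H X Y fX fY aX aY e he hm := by
    apply good_orbitCoprod T H Y fY
    intro y
    rw [stabG_eq_of_inj (⇑e.symm) e.symm.injective (isEquivariant_symm e he) y]
    exact orbitCoprod_good T H X aX hm (e.symm y)
  mem_res K H hKH X fX aX hm := by
    apply good_orbitCoprod T K X fX
    intro x
    rw [stabG_res hKH aX x]
    exact T.res _ H K (orbitCoprod_good T H X aX hm x) hKH
  mem_conj H g X fX aX hm := by
    apply good_orbitCoprod T (conjS g H) X fX
    intro x
    rw [stabG_conj g aX x]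
    exact T.conj _ _ g (orbitCoprod_good T H X aX hm x)
  mem_sub H X Y fX fY aX aY f hinj heq hm := by
    apply good_orbitCoprod T H X fX
    intro x
    rw [stabG_eq_of_inj f hinj heq x]
    exact orbitCoprod_good T H Y aY hm (f x)
  mem_sum H X Y fX fY aX aY hmX hmY := by
    apply good_orbitCoprod T H (X ⊕ Y) inferInstance
    rintro (x | y)
    · rw [stabG_sum_inl]; exact orbitCoprod_good T H X aX hmX x
    · rw [stabG_sum_inr]; exact orbitCoprod_good T H Y aY hmY y
  mem_selfind K H hKH X fX aX hmX hmq := by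
    apply good_orbitCoprod T H _ inferInstance
    have hrelKH : T.rel K H := by
      have hgq := orbitCoprod_good T H _ _ hmq ((1 : H) : H ⧸ K.subgroupOf H)
      rwa [stabG_quot hKH 1, OneMemClass.coe_one, conjS_one] at hgq
    intro t
    refine Quotient.inductionOn t ?_
    rintro ⟨h, x⟩
    rw [stabG_ind hKH aX h x]
    have h1 := T.trans _ _ _ (orbitCoprod_good T K X aX hmX x) hrelKH
    have h2 := T.conj _ _ (h : G) h1
    rwa [conjS_self] at h2

def sigmaSuccEquiv {n : ℕ} (f : Fin (n + 1) → Type) :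
    (f 0 ⊕ Σ i : Fin n, f i.succ) ≃ Σ i : Fin (n + 1), f i where
  toFun x := match x with
    | Sum.inl y => ⟨0, y⟩
    | Sum.inr p => ⟨p.1.succ, p.2⟩
  invFun p := Fin.cases (motive := fun i => f i → (f 0 ⊕ Σ i : Fin n, f i.succ))
    Sum.inl (fun i x => Sum.inr ⟨i, x⟩) p.1 p.2
  left_inv := by rintro (x | ⟨i, x⟩) <;> simp
  right_inv := by
    rintro ⟨i, x⟩
    induction i using Fin.cases <;> simp

lemma sigmaSuccEquiv_equivariant {H : Type} [Group H] {n : ℕ} {f : Fin (n + 1) → Type}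
    (a : ∀ i, MulAction H (f i)) :
    IsEquivariant (sumAction (a 0) (sigmaAction fun i : Fin n => a i.succ)) (sigmaAction a)
      (sigmaSuccEquiv f) := by
  rintro h (x | ⟨i, x⟩) <;> rfl

lemma mem_sigma (I : IndexingSystem G) (H : Subgroup G) :
    ∀ (n : ℕ) (f : Fin n → Type) (fin : ∀ i, Finite (f i)) (a : ∀ i, MulAction H (f i)),
    (∀ i, I.mem H (f i) (fin i) (a i)) → ∀ fS : Finite (Σ i, f i),
    I.mem H (Σ i, f i) fS (sigmaAction a) := by
  intro n
  induction n with
  | zero =>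
    intro f fin a _ fS
    refine I.mem_iso H _ _ fS fS (trivialSMul H _) (sigmaAction a)
      (Equiv.refl _) ?_ (I.mem_trivial H _ fS)
    intro h p
    exact p.1.elim0
  | succ n ih =>
    intro f fin a hmem fS
    haveI : ∀ i, Finite (f i) := fin
    have h0 := hmem 0
    have hs := ih (fun i => f i.succ) (fun i => fin i.succ) (fun i => a i.succ)
      (fun i => hmem i.succ) inferInstance
    have hsum := I.mem_sum H (f 0) (Σ i : Fin n, f i.succ) (fin 0) inferInstance
      (a 0) (sigmaAction fun i => a i.succ) h0 hs
    exact I.mem_iso H _ _ inferInstance fS _ (sigmaAction a) (sigmaSuccEquiv f)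
      (sigmaSuccEquiv_equivariant a) hsum

lemma mem_iff_orbitCoprod (I : IndexingSystem G) (H : Subgroup G) (X : Type)
    (fX : Finite X) (aX : MulAction H X) :
    I.mem H X fX aX ↔ OrbitCoprod (toTS I) H X aX := by
  constructor
  · intro hm
    apply good_orbitCoprod (toTS I) H X fX aX
    intro x
    obtain ⟨f, hf1, hf2, hf3⟩ := orbit_map_exists H aX x
    exact ⟨stabG_le, I.mem_sub H _ X inferInstance fX inferInstance aX f hf2 hf3 hm⟩
  · rintro ⟨n, K, hK, e, he⟩
    have hmem : ∀ i : Fin n, I.mem H (H ⧸ (K i).subgroupOf H) inferInstance inferInstance :=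
      fun i => (hK i).2
    have hsig := mem_sigma I H n (fun i => H ⧸ (K i).subgroupOf H) (fun i => inferInstance)
      (fun i => inferInstance) hmem inferInstance
    exact I.mem_iso H _ X inferInstance fX _ aX e.symm (isEquivariant_symm e he) hsig

lemma toIS_grel (T : TransferSystem G) (K H : Subgroup G) :
    (toIS T).grel K H ↔ T.rel K H := by
  constructor
  · rintro ⟨hKH, hm⟩
    have hgq := orbitCoprod_good T H _ _ hm ((1 : H) : H ⧸ K.subgroupOf H)
    rwa [stabG_quot hKH 1, OneMemClass.coe_one, conjS_one] at hgq
  · intro hrel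
    have hKH := T.le_of_rel _ _ hrel
    refine ⟨hKH, ?_⟩
    show OrbitCoprod T H _ _
    apply good_orbitCoprod T H _ inferInstance
    intro q
    obtain ⟨a, rfl⟩ := QuotientGroup.mk_surjective q
    rw [stabG_quot hKH a]
    have h3 := T.conj K H (a : G) hrel
    rwa [conjS_self] at h3

lemma orbitCoprod_mono {T₁ T₂ : TransferSystem G} (h : T₁ ≤ T₂) {H : Subgroup G}
    {X : Type} {aX : MulAction H X} : OrbitCoprod T₁ H X aX → OrbitCoprod T₂ H X aX := by
  rintro ⟨n, K, hK, e⟩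
  exact ⟨n, K, fun i => h _ _ (hK i), e⟩

end Aux4
/-- The maps `I ↦ →_I` (taking an indexing system to its
graph) and `→ ↦ I_→` (taking a transfer system to the coproducts-of-orbits
indexing system) are inverse order-isomorphisms between the poset of
`G`-indexing systems and the poset of `G`-transfer systems. -/
theorem stmt4 {G : Type} [Group G] [Finite G] :
    ∃ F : IndexingSystem G ≃o TransferSystem G,
      (∀ (I : IndexingSystem G) (K H : Subgroup G),
        (F I).rel K H ↔ I.grel K H) ∧
      (∀ (T : TransferSystem G) (H : Subgroup G) (X : Type) (fX : Finite X)
        (aX : MulAction H X),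
        (F.symm T).mem H X fX aX ↔ OrbitCoprod T H X aX) := by
  refine ⟨{ toFun := toTS, invFun := toIS, left_inv := ?_, right_inv := ?_,
            map_rel_iff' := ?_ }, ?_, ?_⟩
  · intro I
    apply le_antisymm
    · intro H X fX aX hm
      exact (mem_iff_orbitCoprod I H X fX aX).mpr hm
    · intro H X fX aX hm
      exact (mem_iff_orbitCoprod I H X fX aX).mp hm
  · intro T
    apply le_antisymm
    · intro K H h
      exact (toIS_grel T K H).mp h
    · intro K H h
      exact (toIS_grel T K H).mpr h
  · intro I J
    constructor
    · intro hle H X fX aX hm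
      exact (mem_iff_orbitCoprod J H X fX aX).mpr
        (orbitCoprod_mono hle ((mem_iff_orbitCoprod I H X fX aX).mp hm))
    · intro hle K H h
      exact ⟨h.1, hle H _ inferInstance inferInstance h.2⟩
  · intro I K H
    exact Iff.rfl
  · intro T H X fX aX
    exact Iff.rfl
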